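/- (ℓ1-norm bound on the solution found from zero initialization) Let P : ℝⁿ → ℝᵐ be continuously differentiable, u⁰ = 0, s = ‖P(0)‖_∞ > 0, and let μ, L > 0 and ρ > 0 satisfy: ‖P'(u)ᵀh‖_∞ ≥ μ‖h‖₁ for all h ∈ ℝᵐ and all u ∈ B_ρ = {u : ‖u‖₁ ≤ ρ}; ‖(P'(a) − P'(b))v‖_∞ ≤ L‖a−b‖₁‖v‖₁ for all a, b ∈ B_ρ, v ∈ ℝⁿ; and ρ ≥ (μ/L)·(k_max + 2H₀(v̄/2)), where k_max = max{0, ⌈2Ls/μ²⌉ − 2} and v̄ = Ls/μ² − k_max/2. Then every damped sparse-Newton sequence (uᵏ) from u⁰ = 0 converges to a point u* with P(u*) = 0 and ‖u*‖₁ ≤ (μ/L)·(k_max + 2H₀(v̄/2)). -/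

import Mathlib

open Filter Topology

/-- The ℓ1-norm on `ℝ^d`: `‖x‖₁ = Σᵢ |xᵢ|`. -/
noncomputable def l1Norm {d : ℕ} (x : Fin d → ℝ) : ℝ := ∑ i, |x i|

/-- The ℓ∞-norm on `ℝ^d`: `‖x‖_∞ = maxᵢ |xᵢ|`. -/
noncomputable def linfNorm {d : ℕ} (x : Fin d → ℝ) : ℝ := ⨆ i, |x i|

/-- `H₀(δ) = Σ_{ℓ=0}^∞ δ^(2^ℓ)`. -/
noncomputable def H0 (δ : ℝ) : ℝ := ∑' ℓ : ℕ, δ ^ (2 ^ ℓ)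

/-- The transpose of a continuous linear map `A : ℝⁿ → ℝᵐ` applied to `h ∈ ℝᵐ`:
`(Aᵀ h)ᵢ = Σⱼ Aⱼᵢ hⱼ` where `Aⱼᵢ = (A eᵢ)ⱼ`. -/
noncomputable def transposeApply {n m : ℕ} (A : (Fin n → ℝ) →L[ℝ] (Fin m → ℝ))
    (h : Fin m → ℝ) : Fin n → ℝ :=
  fun i => ∑ j, A (Pi.single i 1) j * h j

set_option maxHeartbeats 1200000

lemma l1Norm_nonneg {d : ℕ} (x : Fin d → ℝ) : 0 ≤ l1Norm x :=
  Finset.sum_nonneg fun i _ => abs_nonneg _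

lemma l1Norm_eq_zero {d : ℕ} {x : Fin d → ℝ} (h : l1Norm x ≤ 0) : x = 0 := by
  have h0 : l1Norm x = 0 := le_antisymm h (l1Norm_nonneg x)
  rw [l1Norm] at h0
  have := (Finset.sum_eq_zero_iff_of_nonneg (fun i _ => abs_nonneg (x i))).1 h0
  funext i
  simpa using abs_eq_zero.1 (this i (Finset.mem_univ i))

lemma l1Norm_add {d : ℕ} (x y : Fin d → ℝ) : l1Norm (x + y) ≤ l1Norm x + l1Norm y := by
  simp only [l1Norm, ← Finset.sum_add_distrib]
  exact Finset.sum_le_sum fun i _ => abs_add_le _ _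

lemma l1Norm_smul {d : ℕ} (c : ℝ) (x : Fin d → ℝ) : l1Norm (c • x) = |c| * l1Norm x := by
  simp [l1Norm, Finset.mul_sum, abs_mul]

lemma l1Norm_neg {d : ℕ} (x : Fin d → ℝ) : l1Norm (-x) = l1Norm x := by
  simp [l1Norm]

lemma l1Norm_sub_le {d : ℕ} (x y : Fin d → ℝ) : l1Norm (x - y) ≤ l1Norm x + l1Norm y := by
  simpa [sub_eq_add_neg, l1Norm_neg] using l1Norm_add x (-y)

lemma linfNorm_nonneg {d : ℕ} (x : Fin d → ℝ) : 0 ≤ linfNorm x :=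
  Real.iSup_nonneg fun i => abs_nonneg _

lemma abs_le_linfNorm {d : ℕ} (x : Fin d → ℝ) (i : Fin d) : |x i| ≤ linfNorm x := by
  rw [linfNorm]
  exact le_ciSup (Set.Finite.bddAbove (Set.finite_range fun j => |x j|)) i

lemma linfNorm_le {d : ℕ} {x : Fin d → ℝ} {c : ℝ} (hc : 0 ≤ c)
    (h : ∀ i, |x i| ≤ c) : linfNorm x ≤ c :=
  Real.iSup_le h hc

lemma linfNorm_le_l1Norm {d : ℕ} (x : Fin d → ℝ) : linfNorm x ≤ l1Norm x :=
  linfNorm_le (l1Norm_nonneg x) fun i =>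
    Finset.single_le_sum (fun j _ => abs_nonneg (x j)) (Finset.mem_univ i)

lemma linfNorm_pos {d : ℕ} {x : Fin d → ℝ} (h : x ≠ 0) : 0 < linfNorm x := by
  obtain ⟨i, hi⟩ : ∃ i, x i ≠ 0 := by
    by_contra hc; push_neg at hc; exact h (funext fun i => hc i)
  exact lt_of_lt_of_le (abs_pos.2 hi) (abs_le_linfNorm x i)

lemma l1Norm_pos {d : ℕ} {x : Fin d → ℝ} (h : x ≠ 0) : 0 < l1Norm x :=
  lt_of_lt_of_le (linfNorm_pos h) (linfNorm_le_l1Norm x)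

lemma linfNorm_smul {d : ℕ} (c : ℝ) (x : Fin d → ℝ) :
    linfNorm (c • x) = |c| * linfNorm x := by
  rcases eq_or_ne c 0 with rfl | hc
  · simp [linfNorm]
  · apply le_antisymm
    · refine linfNorm_le (mul_nonneg (abs_nonneg c) (linfNorm_nonneg x)) fun i => ?_
      rw [Pi.smul_apply, smul_eq_mul, abs_mul]
      exact mul_le_mul_of_nonneg_left (abs_le_linfNorm x i) (abs_nonneg c)
    · rw [← le_div_iff₀' (abs_pos.2 hc)]
      refine linfNorm_le (div_nonneg (linfNorm_nonneg _) (abs_nonneg c)) fun i => ?_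
      rw [le_div_iff₀' (abs_pos.2 hc), ← abs_mul]
      exact abs_le_linfNorm (c • x) i

lemma linfNorm_add {d : ℕ} (x y : Fin d → ℝ) :
    linfNorm (x + y) ≤ linfNorm x + linfNorm y :=
  linfNorm_le (add_nonneg (linfNorm_nonneg x) (linfNorm_nonneg y)) fun i =>
    (abs_add_le _ _).trans (add_le_add (abs_le_linfNorm x i) (abs_le_linfNorm y i))

lemma norm_le_l1Norm {d : ℕ} (x : Fin d → ℝ) : ‖x‖ ≤ l1Norm x := by
  rcases isEmpty_or_nonempty (Fin d) with hd | hd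
  · simp [Subsingleton.elim x 0, l1Norm]
  · rw [pi_norm_le_iff_of_nonneg (l1Norm_nonneg x)]
    intro i
    rw [Real.norm_eq_abs]
    exact (abs_le_linfNorm x i).trans (linfNorm_le_l1Norm x)

lemma continuous_l1Norm {d : ℕ} : Continuous (l1Norm (d := d)) :=
  continuous_finset_sum _ fun i _ => (continuous_apply i).abs
/-- bilinear identity: ⟨h, A v⟩ = ⟨Aᵀ h, v⟩ -/
lemma transpose_identity {n m : ℕ} (A : (Fin n → ℝ) →L[ℝ] (Fin m → ℝ))
    (h : Fin m → ℝ) (v : Fin n → ℝ) :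
    ∑ j, A v j * h j = ∑ i, v i * transposeApply A h i := by
  have hv0 : v = ∑ i, v i • (Pi.single i (1:ℝ) : Fin n → ℝ) := by
    funext j
    simp [Finset.sum_apply, Pi.single_apply]
  have hv : A v = ∑ i, v i • A (Pi.single i 1) := by
    conv_lhs => rw [hv0]
    rw [map_sum]
    simp [map_smul]
  rw [hv]
  simp only [Finset.sum_apply, Pi.smul_apply, smul_eq_mul, Finset.sum_mul,
    transposeApply, Finset.mul_sum]
  rw [Finset.sum_comm]
  congr 1; ext i; congr 1; ext j; ring

/-- existence of a small-ℓ1 solution -/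
lemma exists_small_solution {n m : ℕ} (hn : 0 < n)
    (A : (Fin n → ℝ) →L[ℝ] (Fin m → ℝ)) (μ : ℝ) (hμ : 0 < μ)
    (hA : ∀ h : Fin m → ℝ, μ * l1Norm h ≤ linfNorm (transposeApply A h))
    (b : Fin m → ℝ) (hb : ∃ v, A v = b) :
    ∃ v, A v = b ∧ l1Norm v ≤ linfNorm b / μ := by
  set κ := linfNorm b / μ with hκ
  have hκ0 : 0 ≤ κ := div_nonneg (linfNorm_nonneg b) hμ.le
  set K : Set (Fin n → ℝ) := {v | l1Norm v ≤ κ} with hK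
  have hKconv : Convex ℝ K := by
    intro x hx y hy a c ha hc hac
    calc l1Norm (a • x + c • y) ≤ l1Norm (a • x) + l1Norm (c • y) := l1Norm_add _ _
    _ = a * l1Norm x + c * l1Norm y := by
        rw [l1Norm_smul, l1Norm_smul, abs_of_nonneg ha, abs_of_nonneg hc]
    _ ≤ a * κ + c * κ := add_le_add (mul_le_mul_of_nonneg_left hx ha)
        (mul_le_mul_of_nonneg_left hy hc)
    _ = κ := by rw [← add_mul, hac, one_mul]
  have hKcpt : IsCompact K := by
    have hclosed : IsClosed K := isClosed_le continuous_l1Norm continuous_const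
    have hbdd : Bornology.IsBounded K := by
      apply Bornology.IsBounded.subset (Metric.isBounded_closedBall (x := (0 : Fin n → ℝ)) (r := κ))
      intro v hv
      simp only [Metric.mem_closedBall, dist_zero_right]
      exact (norm_le_l1Norm v).trans hv
    exact Metric.isCompact_of_isClosed_isBounded hclosed hbdd
  set C : Set (Fin m → ℝ) := A '' K with hC
  by_contra hcon
  push_neg at hcon
  have hbC : b ∉ C := by
    rintro ⟨v, hvK, hvb⟩
    exact absurd hvK (not_le.2 (hcon v hvb))
  obtain ⟨f, t, hft, htb⟩ := geometric_hahn_banach_closed_point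
    (hKconv.is_linear_image A.toLinearMap.isLinear) (hKcpt.image A.continuous).isClosed hbC
  set h : Fin m → ℝ := fun j => f (Pi.single j 1) with hh
  have frep : ∀ y : Fin m → ℝ, f y = ∑ j, y j * h j := by
    intro y
    have hy0 : y = ∑ j, y j • (Pi.single j (1:ℝ) : Fin m → ℝ) := by
      funext j
      simp [Finset.sum_apply, Pi.single_apply]
    conv_lhs => rw [hy0]
    rw [map_sum]
    simp [map_smul, hh, smul_eq_mul]
  have hfb : f b ≤ linfNorm b * l1Norm h := by
    rw [frep b, l1Norm, Finset.mul_sum]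
    refine Finset.sum_le_sum fun j _ => ?_
    calc b j * h j ≤ |b j * h j| := le_abs_self _
    _ = |b j| * |h j| := abs_mul _ _
    _ ≤ linfNorm b * |h j| := mul_le_mul_of_nonneg_right (abs_le_linfNorm b j) (abs_nonneg _)
  set g : Fin n → ℝ := transposeApply A h with hg
  obtain ⟨i₀, -, hi₀⟩ := Finset.exists_max_image Finset.univ (fun i => |g i|)
    (Finset.univ_nonempty_iff.2 (Fin.pos_iff_nonempty.1 hn))
  have hginf : linfNorm g = |g i₀| :=
    le_antisymm (linfNorm_le (abs_nonneg _) fun i => hi₀ i (Finset.mem_univ i))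
      (abs_le_linfNorm g i₀)
  set c : ℝ := if 0 ≤ g i₀ then 1 else -1 with hc
  have hcabs : |c| = 1 := by
    rw [hc]; split <;> simp
  have hcg : c * g i₀ = |g i₀| := by
    rw [hc]; split
    · rw [one_mul, abs_of_nonneg ‹_›]
    · rw [neg_one_mul, abs_of_neg (lt_of_not_ge ‹_›)]
  set v₀ : Fin n → ℝ := Pi.single i₀ (κ * c) with hv₀
  have hv₀K : v₀ ∈ K := by
    have : l1Norm v₀ = κ := by
      rw [l1Norm, hv₀]
      rw [Finset.sum_eq_single i₀]
      · simp [abs_mul, hcabs, abs_of_nonneg hκ0]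
      · intro i _ hi; simp [Pi.single_apply, hi]
      · intro hmem; exact absurd (Finset.mem_univ i₀) hmem
    exact le_of_eq this
  have hfAv₀ : f (A v₀) = κ * linfNorm g := by
    rw [frep (A v₀), transpose_identity A h v₀, hv₀]
    rw [Finset.sum_eq_single i₀]
    · rw [Pi.single_eq_same, hginf, mul_assoc, hcg]
    · intro i _ hi; simp [Pi.single_apply, hi]
    · intro hmem; exact absurd (Finset.mem_univ i₀) hmem
  have hchain : f b ≤ f (A v₀) := by
    calc f b ≤ linfNorm b * l1Norm h := hfb
    _ = κ * (μ * l1Norm h) := by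
        rw [hκ]; field_simp
    _ ≤ κ * linfNorm g := mul_le_mul_of_nonneg_left (hA h) hκ0
    _ = f (A v₀) := hfAv₀.symm
  have : f (A v₀) < t := hft _ ⟨v₀, hv₀K, rfl⟩
  linarith

lemma taylor_bound {n m : ℕ} (P : (Fin n → ℝ) → (Fin m → ℝ)) (hP : ContDiff ℝ 1 P)
    (L ρ : ℝ) (hL : 0 ≤ L)
    (hLip : ∀ a, l1Norm a ≤ ρ → ∀ b, l1Norm b ≤ ρ → ∀ v : Fin n → ℝ,
      linfNorm ((fderiv ℝ P a - fderiv ℝ P b) v) ≤ L * l1Norm (a - b) * l1Norm v)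
    (u d : Fin n → ℝ) (hseg : ∀ t ∈ Set.Icc (0:ℝ) 1, l1Norm (u - t • d) ≤ ρ) :
    linfNorm (P (u - d) - P u + (fderiv ℝ P u) d) ≤ L / 2 * l1Norm d ^ 2 := by
  have hld : 0 ≤ l1Norm d := l1Norm_nonneg d
  have hbound_nonneg : 0 ≤ L / 2 * l1Norm d ^ 2 := by positivity
  refine linfNorm_le hbound_nonneg fun j => ?_
  set c : ℝ → (Fin n → ℝ) := fun t => u - t • d with hcdef
  have hdiff : ∀ x, HasFDerivAt P (fderiv ℝ P x) x := fun x =>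
    ((hP.differentiable one_ne_zero) x).hasFDerivAt
  have hc : ∀ t : ℝ, HasDerivAt c (-d) t := by
    intro t
    simpa using ((hasDerivAt_id t).smul_const d).const_sub u
  have hgj : ∀ t : ℝ, HasDerivAt (fun t => P (c t) j) ((fderiv ℝ P (c t)) (-d) j) t := by
    intro t
    have h1 : HasDerivAt (fun t => P (c t)) ((fderiv ℝ P (c t)) (-d)) t :=
      (hdiff (c t)).comp_hasDerivAt t (hc t)
    exact ((ContinuousLinearMap.proj (R := ℝ) (φ := fun _ : Fin m => ℝ) j).hasFDerivAt.comp_hasDerivAt t h1)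
  have hcont : Continuous fun t : ℝ => (fderiv ℝ P (c t)) (-d) j := by
    have h1 : Continuous fun t : ℝ => fderiv ℝ P (c t) :=
      (hP.continuous_fderiv one_ne_zero).comp
        (continuous_const.sub (continuous_id.smul continuous_const))
    exact (continuous_apply j).comp
      ((ContinuousLinearMap.apply ℝ (Fin m → ℝ) (-d)).continuous.comp h1)
  have hftc : ∫ t in (0:ℝ)..1, (fderiv ℝ P (c t)) (-d) j
      = P (u - d) j - P u j := by
    have := intervalIntegral.integral_eq_sub_of_hasDerivAt
      (f := fun t => P (c t) j) (f' := fun t => (fderiv ℝ P (c t)) (-d) j)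
      (a := (0:ℝ)) (b := 1) (fun t _ => hgj t)
      (hcont.intervalIntegrable 0 1)
    simpa [hcdef] using this
  -- rewrite target as integral
  have key : (P (u - d) - P u + (fderiv ℝ P u) d) j
      = ∫ t in (0:ℝ)..1, ((fderiv ℝ P u - fderiv ℝ P (c t)) d) j := by
    have hsplit : ∀ t : ℝ, ((fderiv ℝ P u - fderiv ℝ P (c t)) d) j
        = (fderiv ℝ P (c t)) (-d) j + (fderiv ℝ P u) d j := by
      intro t
      simp [ContinuousLinearMap.sub_apply, map_neg]
      ring
    rw [intervalIntegral.integral_congr (g := fun t => (fderiv ℝ P (c t)) (-d) j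
        + (fderiv ℝ P u) d j) (fun t _ => hsplit t)]
    rw [intervalIntegral.integral_add (hcont.intervalIntegrable 0 1)
      (intervalIntegrable_const), hftc]
    simp
  rw [key]
  have habs : |∫ t in (0:ℝ)..1, ((fderiv ℝ P u - fderiv ℝ P (c t)) d) j|
      ≤ ∫ t in (0:ℝ)..1, |((fderiv ℝ P u - fderiv ℝ P (c t)) d) j| := by
    exact intervalIntegral.abs_integral_le_integral_abs (by norm_num)
  have hcont2 : Continuous fun t : ℝ => ((fderiv ℝ P u - fderiv ℝ P (c t)) d) j := by
    have h1 : Continuous fun t : ℝ => fderiv ℝ P (c t) :=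
      (hP.continuous_fderiv one_ne_zero).comp
        (continuous_const.sub (continuous_id.smul continuous_const))
    have h2 : Continuous fun t : ℝ => (fderiv ℝ P u - fderiv ℝ P (c t)) :=
      continuous_const.sub h1
    exact (continuous_apply j).comp
      ((ContinuousLinearMap.apply ℝ (Fin m → ℝ) d).continuous.comp h2)
  have hptwise : ∀ t ∈ Set.Icc (0:ℝ) 1,
      |((fderiv ℝ P u - fderiv ℝ P (c t)) d) j| ≤ (L * l1Norm d ^ 2) * t := by
    intro t ht
    have h1 : |((fderiv ℝ P u - fderiv ℝ P (c t)) d) j|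
        ≤ linfNorm ((fderiv ℝ P u - fderiv ℝ P (c t)) d) :=
      abs_le_linfNorm _ j
    have hu : l1Norm u ≤ ρ := by
      have := hseg 0 ⟨le_refl 0, zero_le_one⟩
      simpa using this
    have hct : l1Norm (c t) ≤ ρ := hseg t ht
    have h2 := hLip u hu (c t) hct d
    have h3 : l1Norm (u - c t) = t * l1Norm d := by
      have : u - c t = t • d := by simp [hcdef]
      rw [this, l1Norm_smul, abs_of_nonneg ht.1]
    calc |((fderiv ℝ P u - fderiv ℝ P (c t)) d) j|
        ≤ L * l1Norm (u - c t) * l1Norm d := h1.trans h2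
    _ = (L * l1Norm d ^ 2) * t := by rw [h3]; ring
  calc |∫ t in (0:ℝ)..1, ((fderiv ℝ P u - fderiv ℝ P (c t)) d) j|
      ≤ ∫ t in (0:ℝ)..1, |((fderiv ℝ P u - fderiv ℝ P (c t)) d) j| := habs
  _ ≤ ∫ t in (0:ℝ)..1, (L * l1Norm d ^ 2) * t := by
      refine intervalIntegral.integral_mono_on (by norm_num)
        (hcont2.abs.intervalIntegrable 0 1)
        ((continuous_const.mul continuous_id).intervalIntegrable 0 1) hptwise
  _ = L / 2 * l1Norm d ^ 2 := by
      rw [intervalIntegral.integral_const_mul, integral_id]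
      ring

/-- ℓ1-norm bound on the solution found from zero initialization:
every damped sparse-Newton sequence from `u⁰ = 0` converges to a zero `u*` of
`P` with `‖u*‖₁ ≤ (μ/L)(k_max + 2H₀(v̄/2))`. -/
theorem statement12 {n m : ℕ} (P : (Fin n → ℝ) → (Fin m → ℝ)) (hP : ContDiff ℝ 1 P)
    (s : ℝ) (hs : s = linfNorm (P 0)) (hspos : 0 < s)
    (ρ : ℝ) (hρ : 0 < ρ) (Bρ : Set (Fin n → ℝ)) (hB : Bρ = {v | l1Norm v ≤ ρ})
    (μ : ℝ) (hμ : 0 < μ)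
    (hA' : ∀ v ∈ Bρ, ∀ h : Fin m → ℝ,
      μ * l1Norm h ≤ linfNorm (transposeApply (fderiv ℝ P v) h))
    (L : ℝ) (hL : 0 < L)
    (hLip : ∀ a ∈ Bρ, ∀ b ∈ Bρ, ∀ v : Fin n → ℝ,
      linfNorm ((fderiv ℝ P a - fderiv ℝ P b) v) ≤ L * l1Norm (a - b) * l1Norm v)
    (kmax : ℤ) (hkmax : kmax = max 0 (⌈2 * (L * s / μ ^ 2)⌉ - 2))
    (vbar : ℝ) (hvbar : vbar = L * s / μ ^ 2 - (kmax : ℝ) / 2)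
    (hρbig : ρ ≥ μ / L * ((kmax : ℝ) + 2 * H0 (vbar / 2)))
    -- a damped sparse-Newton sequence from `u0 = 0`:
    (u w : ℕ → Fin n → ℝ) (γ : ℕ → ℝ) (hu0 : u 0 = 0)
    (hw_eq : ∀ k, fderiv ℝ P (u k) (w k) = P (u k))
    (hw_min : ∀ k, ∀ v : Fin n → ℝ, fderiv ℝ P (u k) v = P (u k) →
      l1Norm (w k) ≤ l1Norm v)
    (hγ : ∀ k, γ k = if P (u k) = 0 then 1
      else min 1 (μ ^ 2 / (L * linfNorm (P (u k)))))
    (hstep : ∀ k, u (k + 1) = u k - γ k • w k) :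
    ∃ ustar : Fin n → ℝ, Tendsto u atTop (𝓝 ustar) ∧ P ustar = 0 ∧
      l1Norm ustar ≤ μ / L * ((kmax : ℝ) + 2 * H0 (vbar / 2)) := by
  -- degenerate dimensions
  have hm : 0 < m := by
    rcases Nat.eq_zero_or_pos m with hm0 | hm0
    · exfalso
      subst hm0
      rw [hs, linfNorm] at hspos
      rw [iSup_of_empty', Real.sSup_empty] at hspos
      exact lt_irrefl 0 hspos
    · exact hm0
  have hP0 : P 0 ≠ 0 := by
    intro h0
    rw [hs, h0] at hspos
    have : linfNorm (0 : Fin m → ℝ) = 0 := by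
      haveI : Nonempty (Fin m) := Fin.pos_iff_nonempty.1 hm
      simp [linfNorm]
    rw [this] at hspos
    exact lt_irrefl 0 hspos
  have h0B : (0 : Fin n → ℝ) ∈ Bρ := by
    rw [hB]
    have : l1Norm (0 : Fin n → ℝ) = 0 := by simp [l1Norm]
    simp only [Set.mem_setOf_eq, this]
    exact hρ.le
  have hn : 0 < n := by
    rcases Nat.eq_zero_or_pos n with hn0 | hn0
    · exfalso
      have h1 := hA' 0 h0B (P 0)
      have h2 : linfNorm (transposeApply (fderiv ℝ P 0) (P 0)) = 0 := by
        subst hn0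
        rw [linfNorm, iSup_of_empty', Real.sSup_empty]
      rw [h2] at h1
      exact absurd h1 (not_le.2 (mul_pos hμ (l1Norm_pos hP0)))
    · exact hn0
  -- basic quantities
  set a0 : ℝ := L * s / μ ^ 2 with ha0
  have ha0pos : 0 < a0 := by positivity
  set N : ℕ := kmax.toNat with hN
  have hkm0 : 0 ≤ kmax := hkmax ▸ le_max_left _ _
  have hNcast : (kmax : ℝ) = (N : ℝ) := by
    rw [hN]
    exact_mod_cast (Int.toNat_of_nonneg hkm0).symm
  set δ : ℝ := vbar / 2 with hδ
  have hvb_eq : vbar = a0 - (N : ℝ) / 2 := by rw [hvbar, ← hNcast]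
  have hkm_ge : (2 * a0 - 2 : ℝ) ≤ (kmax : ℝ) := by
    have h1 : (⌈2 * a0⌉ - 2 : ℤ) ≤ kmax := hkmax ▸ le_max_right _ _
    have h2 : (2 * a0 : ℝ) ≤ (⌈2 * a0⌉ : ℝ) := Int.le_ceil _
    have h3 : ((⌈2 * a0⌉ - 2 : ℤ) : ℝ) ≤ (kmax : ℝ) := by exact_mod_cast h1
    push_cast at h3
    linarith
  have hvb1 : vbar ≤ 1 := by rw [hvbar]; linarith
  have hvbpos : 0 < vbar := by
    rcases le_or_gt (⌈2 * a0⌉ - 2 : ℤ) 0 with hc | hc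
    · have : kmax = 0 := by rw [hkmax, max_eq_left hc]
      rw [hvbar, this]
      simpa using ha0pos
    · have hk_eq : kmax = ⌈2 * a0⌉ - 2 := by rw [hkmax, max_eq_right hc.le]
      have h2 : ((⌈2 * a0⌉ : ℤ) : ℝ) < 2 * a0 + 1 := Int.ceil_lt_add_one _
      have h3 : (kmax : ℝ) = ((⌈2 * a0⌉ : ℤ) : ℝ) - 2 := by exact_mod_cast hk_eq
      rw [hvbar]
      linarith
  have hvbhalf : 1 ≤ N → 1 / 2 < vbar := by
    intro hN1
    have hkm1 : (1 : ℤ) ≤ kmax := by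
      rw [hN] at hN1
      omega
    have hc : 0 < (⌈2 * a0⌉ - 2 : ℤ) := by
      by_contra hcon
      push_neg at hcon
      rw [hkmax, max_eq_left hcon] at hkm1
      omega
    have hk_eq : kmax = ⌈2 * a0⌉ - 2 := by rw [hkmax, max_eq_right hc.le]
    have h2 : ((⌈2 * a0⌉ : ℤ) : ℝ) < 2 * a0 + 1 := Int.ceil_lt_add_one _
    have h3 : (kmax : ℝ) = ((⌈2 * a0⌉ : ℤ) : ℝ) - 2 := by exact_mod_cast hk_eq
    rw [hvbar]
    linarith
  have hδpos : 0 < δ := by rw [hδ]; linarith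
  have hδhalf : δ ≤ 1 / 2 := by rw [hδ]; linarith
  have hδ1 : δ < 1 := lt_of_le_of_lt hδhalf (by norm_num)
  -- the sequence of bounds
  set A : ℕ → ℝ := fun k => if k ≤ N then a0 - (k : ℝ) / 2 else 2 * δ ^ 2 ^ (k - N) with hA
  have hAdamped : ∀ k, k ≤ N → A k = a0 - (k : ℝ) / 2 := fun k hk => if_pos hk
  have hAnewton : ∀ k, N ≤ k → A k = 2 * δ ^ 2 ^ (k - N) := by
    intro k hk
    by_cases hkN : k ≤ N
    · have hkeq : k = N := le_antisymm hkN hk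
      subst hkeq
      rw [hAdamped N le_rfl, Nat.sub_self, pow_zero, pow_one, hδ, ← hvb_eq]
      ring
    · rw [hA]
      simp only
      rw [if_neg hkN]
  have hA_ge_vbar : ∀ k, k ≤ N → vbar ≤ A k := by
    intro k hk
    rw [hAdamped k hk, hvb_eq]
    have : (k : ℝ) ≤ (N : ℝ) := by exact_mod_cast hk
    linarith
  have hApos : ∀ k, 0 < A k := by
    intro k
    rcases le_or_gt k N with hk | hk
    · exact lt_of_lt_of_le hvbpos (hA_ge_vbar k hk)
    · rw [hAnewton k hk.le]
      positivity
  have hAle1 : ∀ k, N ≤ k → A k ≤ 1 := by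
    intro k hk
    rw [hAnewton k hk]
    have h1 : δ ^ 2 ^ (k - N) ≤ δ ^ 1 :=
      pow_le_pow_of_le_one hδpos.le hδ1.le (Nat.one_le_two_pow)
    rw [pow_one] at h1
    linarith
  set σ : ℕ → ℝ := fun k => μ / L * min (A k) 1 with hσ
  have hσnonneg : ∀ k, 0 ≤ σ k := by
    intro k
    apply mul_nonneg (by positivity)
    exact le_min (hApos k).le zero_le_one
  have hσle : ∀ k, σ k ≤ μ / L := by
    intro k
    rw [hσ]
    have : min (A k) 1 ≤ 1 := min_le_right _ _
    calc μ / L * min (A k) 1 ≤ μ / L * 1 :=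
      mul_le_mul_of_nonneg_left this (by positivity)
    _ = μ / L := mul_one _
  have hσleN : ∀ k, N ≤ k → σ k ≤ μ / L * (2 * δ ^ 2 ^ (k - N)) := by
    intro k hk
    rw [hσ]
    exact mul_le_mul_of_nonneg_left ((min_le_left _ _).trans_eq (hAnewton k hk))
      (by positivity)
  set S : ℕ → ℝ := fun k => ∑ j ∈ Finset.range k, σ j with hS
  set T : ℝ := μ / L * ((N : ℝ) + 2 * H0 δ) with hT
  -- summability of the power series
  have hsumδ : Summable (fun ℓ : ℕ => δ ^ 2 ^ ℓ) := by
    apply Summable.of_nonneg_of_le (fun ℓ => by positivity)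
      (fun ℓ => pow_le_pow_of_le_one hδpos.le hδ1.le (Nat.lt_two_pow_self (n := ℓ)).le)
    exact summable_geometric_of_lt_one hδpos.le hδ1
  have hH0nonneg : 0 ≤ H0 δ := tsum_nonneg fun ℓ => by positivity
  have hpartial : ∀ k, ∑ ℓ ∈ Finset.range k, δ ^ 2 ^ ℓ ≤ H0 δ := by
    intro k
    exact hsumδ.sum_le_tsum (Finset.range k) (fun ℓ _ => by positivity)
  have hST : ∀ k, S k ≤ T := by
    intro k
    rcases le_or_gt k N with hk | hk
    · calc S k ≤ ∑ j ∈ Finset.range k, μ / L :=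
        Finset.sum_le_sum fun j _ => hσle j
      _ = (k : ℝ) * (μ / L) := by rw [Finset.sum_const, Finset.card_range]; ring
      _ ≤ (N : ℝ) * (μ / L) := by
          have : (k : ℝ) ≤ (N : ℝ) := by exact_mod_cast hk
          apply mul_le_mul_of_nonneg_right this (by positivity)
      _ ≤ T := by
          rw [hT]
          nlinarith only [mul_nonneg (div_pos hμ hL).le hH0nonneg]
    · have hksplit : k = N + (k - N) := by omega
      have : S k = ∑ j ∈ Finset.range N, σ j + ∑ ℓ ∈ Finset.range (k - N), σ (N + ℓ) := by
        rw [hS]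
        simp only
        conv_lhs => rw [hksplit]
        rw [Finset.sum_range_add]
      rw [this]
      have h1 : ∑ j ∈ Finset.range N, σ j ≤ (N : ℝ) * (μ / L) := by
        calc ∑ j ∈ Finset.range N, σ j ≤ ∑ j ∈ Finset.range N, μ / L :=
          Finset.sum_le_sum fun j _ => hσle j
        _ = (N : ℝ) * (μ / L) := by rw [Finset.sum_const, Finset.card_range]; ring
      have h2 : ∑ ℓ ∈ Finset.range (k - N), σ (N + ℓ)
          ≤ μ / L * 2 * H0 δ := by
        calc ∑ ℓ ∈ Finset.range (k - N), σ (N + ℓ)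
            ≤ ∑ ℓ ∈ Finset.range (k - N), μ / L * (2 * δ ^ 2 ^ ℓ) := by
              refine Finset.sum_le_sum fun ℓ _ => ?_
              have := hσleN (N + ℓ) (Nat.le_add_right N ℓ)
              simpa [Nat.add_sub_cancel_left] using this
        _ = μ / L * 2 * ∑ ℓ ∈ Finset.range (k - N), δ ^ 2 ^ ℓ := by
              rw [Finset.mul_sum]
              congr 1; ext ℓ; ring
        _ ≤ μ / L * 2 * H0 δ := by
              apply mul_le_mul_of_nonneg_left (hpartial _) (by positivity)
      rw [hT]
      linarith only [h1, h2]
  have hTeq : T = μ / L * ((kmax : ℝ) + 2 * H0 (vbar / 2)) := by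
    rw [hT, hNcast, hδ]
  have hTρ : T ≤ ρ := hTeq.trans_le hρbig
  -- main induction
  haveI : Nonempty (Fin m) := Fin.pos_iff_nonempty.1 hm
  have hl1zero : l1Norm (0 : Fin n → ℝ) = 0 := by simp [l1Norm]
  have hlinfzero : linfNorm (0 : Fin m → ℝ) = 0 := by simp [linfNorm]
  have hSsucc : ∀ k, S (k + 1) = S k + σ k := fun k => Finset.sum_range_succ σ k
  have hLip' : ∀ a, l1Norm a ≤ ρ → ∀ b, l1Norm b ≤ ρ → ∀ v : Fin n → ℝ,
      linfNorm ((fderiv ℝ P a - fderiv ℝ P b) v) ≤ L * l1Norm (a - b) * l1Norm v :=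
    fun a ha b hb v => hLip a (by rw [hB]; exact ha) b (by rw [hB]; exact hb) v
  have key_step : ∀ k, (l1Norm (u k) ≤ S k ∧ L * linfNorm (P (u k)) ≤ μ ^ 2 * A k) →
      ((l1Norm (u (k + 1)) ≤ S (k + 1) ∧
        L * linfNorm (P (u (k + 1))) ≤ μ ^ 2 * A (k + 1)) ∧
       l1Norm (u (k + 1) - u k) ≤ σ k) := by
    rintro k ⟨hSk, hak⟩
    by_cases hz : P (u k) = 0
    · have hw0 : w k = 0 := by
        have h1 := hw_min k 0 (by rw [map_zero, hz])
        rw [hl1zero] at h1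
        exact l1Norm_eq_zero h1
      have hu1 : u (k + 1) = u k := by rw [hstep k, hw0, smul_zero, sub_zero]
      refine ⟨⟨?_, ?_⟩, ?_⟩
      · rw [hu1, hSsucc]
        linarith only [hSk, hσnonneg k]
      · rw [hu1, hz, hlinfzero, mul_zero]
        exact mul_nonneg (by positivity) (hApos _).le
      · rw [hu1, sub_self, hl1zero]
        exact hσnonneg k
    · set r := linfNorm (P (u k)) with hr
      have hrpos : 0 < r := linfNorm_pos hz
      have hγk : γ k = min 1 (μ ^ 2 / (L * r)) := by rw [hγ k, if_neg hz]
      have hγpos : 0 < γ k := by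
        rw [hγk]
        exact lt_min one_pos (by positivity)
      have hγle1 : γ k ≤ 1 := by rw [hγk]; exact min_le_left _ _
      have hukρ : l1Norm (u k) ≤ ρ := le_trans hSk ((hST k).trans hTρ)
      have hukB : u k ∈ Bρ := by rw [hB]; exact hukρ
      obtain ⟨v, hv1, hv2⟩ := exists_small_solution hn (fderiv ℝ P (u k)) μ hμ
        (fun h => hA' (u k) hukB h) (P (u k)) ⟨w k, hw_eq k⟩
      have hwb : l1Norm (w k) ≤ r / μ := (hw_min k v hv1).trans hv2
      have hwnn : 0 ≤ l1Norm (w k) := l1Norm_nonneg _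
      -- γ k * r bound
      have hγrmul : γ k * r ≤ μ ^ 2 / L * min (A k) 1 := by
        rcases le_or_gt (μ ^ 2) (L * r) with hc | hc
        · have hle1 : μ ^ 2 / (L * r) ≤ 1 := by
            rw [div_le_one (by positivity)]; exact hc
          have hγeq : γ k = μ ^ 2 / (L * r) := by rw [hγk, min_eq_right hle1]
          have hA1 : 1 ≤ A k := by nlinarith only [hc, hak, mul_pos hμ hμ]
          rw [min_eq_right hA1, hγeq]
          rw [mul_one]
          apply le_of_eq
          field_simp
        · have hγeq : γ k = 1 := by
            rw [hγk]
            apply min_eq_left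
            rw [le_div_iff₀ (by positivity)]
            linarith
          rw [hγeq, one_mul]
          rcases le_total (A k) 1 with hA1 | hA1
          · rw [min_eq_left hA1, div_mul_eq_mul_div, le_div_iff₀ hL]
            linarith
          · rw [min_eq_right hA1, mul_one, le_div_iff₀ hL]
            linarith
      -- step length bound
      have hd : l1Norm (γ k • w k) ≤ σ k := by
        rw [l1Norm_smul, abs_of_pos hγpos]
        calc γ k * l1Norm (w k) ≤ γ k * (r / μ) :=
          mul_le_mul_of_nonneg_left hwb hγpos.le
        _ = (γ k * r) / μ := by ring
        _ ≤ (μ ^ 2 / L * min (A k) 1) / μ := by gcongr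
        _ = σ k := by rw [hσ]; field_simp
      have hdiffeq : u (k + 1) - u k = -(γ k • w k) := by
        rw [hstep k]; abel
      have hstep_len : l1Norm (u (k + 1) - u k) ≤ σ k := by
        rw [hdiffeq, l1Norm_neg]; exact hd
      have hS1 : l1Norm (u (k + 1)) ≤ S (k + 1) := by
        have he : u (k + 1) = u k + (u (k + 1) - u k) := by abel
        calc l1Norm (u (k + 1)) = l1Norm (u k + (u (k + 1) - u k)) := by rw [← he]
        _ ≤ l1Norm (u k) + l1Norm (u (k + 1) - u k) := l1Norm_add _ _
        _ ≤ S k + σ k := add_le_add hSk hstep_len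
        _ = S (k + 1) := (hSsucc k).symm
      refine ⟨⟨hS1, ?_⟩, hstep_len⟩
      -- Taylor step
      have hseg : ∀ t ∈ Set.Icc (0 : ℝ) 1, l1Norm (u k - t • (γ k • w k)) ≤ ρ := by
        intro t ht
        calc l1Norm (u k - t • (γ k • w k))
            ≤ l1Norm (u k) + l1Norm (t • (γ k • w k)) := l1Norm_sub_le _ _
        _ = l1Norm (u k) + |t| * l1Norm (γ k • w k) := by rw [l1Norm_smul]
        _ ≤ S k + 1 * σ k := by
            apply add_le_add hSk
            apply mul_le_mul (abs_le.2 ⟨by linarith [ht.1], ht.2⟩) hd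
              (l1Norm_nonneg _) zero_le_one
        _ = S (k + 1) := by rw [hSsucc k]; ring
        _ ≤ ρ := (hST (k + 1)).trans hTρ
      have htay := taylor_bound P hP L ρ hL.le hLip' (u k) (γ k • w k) hseg
      have hfd : (fderiv ℝ P (u k)) (γ k • w k) = γ k • P (u k) := by
        rw [map_smul, hw_eq k]
      have hdecomp : P (u (k + 1)) =
          (P (u k - γ k • w k) - P (u k) + (fderiv ℝ P (u k)) (γ k • w k))
            + (1 - γ k) • P (u k) := by
        rw [hstep k, hfd]
        funext j
        simp only [Pi.add_apply, Pi.sub_apply, Pi.smul_apply, smul_eq_mul]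
        ring
      have hr1 : linfNorm (P (u (k + 1))) ≤ L / 2 * (γ k * (r / μ)) ^ 2 + (1 - γ k) * r := by
        rw [hdecomp]
        calc linfNorm ((P (u k - γ k • w k) - P (u k) + (fderiv ℝ P (u k)) (γ k • w k))
              + (1 - γ k) • P (u k))
            ≤ linfNorm (P (u k - γ k • w k) - P (u k) + (fderiv ℝ P (u k)) (γ k • w k))
              + linfNorm ((1 - γ k) • P (u k)) := linfNorm_add _ _
        _ ≤ L / 2 * l1Norm (γ k • w k) ^ 2 + (1 - γ k) * r := by
            apply add_le_add htay
            rw [linfNorm_smul, abs_of_nonneg (by linarith)]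
        _ ≤ L / 2 * (γ k * (r / μ)) ^ 2 + (1 - γ k) * r := by
            have h1 : l1Norm (γ k • w k) ≤ γ k * (r / μ) := by
              rw [l1Norm_smul, abs_of_pos hγpos]
              exact mul_le_mul_of_nonneg_left hwb hγpos.le
            have h2 : 0 ≤ l1Norm (γ k • w k) := l1Norm_nonneg _
            gcongr
      have hbound : L * linfNorm (P (u (k + 1)))
          ≤ L * (L / 2 * (γ k * (r / μ)) ^ 2 + (1 - γ k) * r) :=
        mul_le_mul_of_nonneg_left hr1 hL.le
      rcases lt_or_ge (μ ^ 2) (L * r) with hc | hc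
      · -- damped step
        have hle1 : μ ^ 2 / (L * r) ≤ 1 := by
          rw [div_le_one (by positivity)]; exact hc.le
        have hγeq : γ k = μ ^ 2 / (L * r) := by rw [hγk, min_eq_right hle1]
        have hkN : k < N := by
          by_contra hkN'
          push_neg at hkN'
          have h1 := hAle1 k hkN'
          nlinarith only [hc, hak, h1, mul_pos hμ hμ]
        have hAk1 : A (k + 1) = A k - 1 / 2 := by
          rw [hAdamped k (by omega), hAdamped (k + 1) (by omega)]
          push_cast
          ring
        calc L * linfNorm (P (u (k + 1)))
            ≤ L * (L / 2 * (γ k * (r / μ)) ^ 2 + (1 - γ k) * r) := hbound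
        _ = L * r - μ ^ 2 / 2 := by
            rw [hγeq]
            field_simp
            ring
        _ ≤ μ ^ 2 * A k - μ ^ 2 / 2 := by linarith only [hak]
        _ = μ ^ 2 * A (k + 1) := by rw [hAk1]; ring
      · -- Newton step
        have hγeq : γ k = 1 := by
          rw [hγk]
          apply min_eq_left
          rw [le_div_iff₀ (by positivity)]
          linarith
        have hquad : L * (L / 2 * (γ k * (r / μ)) ^ 2 + (1 - γ k) * r)
            = (L * r) ^ 2 / (2 * μ ^ 2) := by
          rw [hγeq]
          field_simp
          ring
        rcases lt_or_ge k N with hkN | hkN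
        · -- still within the damped budget
          have hN1 : 1 ≤ N := by omega
          have h12 : 1 / 2 ≤ A (k + 1) := by
            rcases le_or_gt (k + 1) N with hk1 | hk1
            · exact le_trans (hvbhalf hN1).le (hA_ge_vbar (k + 1) hk1)
            · have hkeq : k + 1 = N + 1 := by omega
              exfalso; omega
          calc L * linfNorm (P (u (k + 1)))
              ≤ (L * r) ^ 2 / (2 * μ ^ 2) := hbound.trans_eq hquad
          _ ≤ μ ^ 2 / 2 := by
              rw [div_le_div_iff₀ (by positivity) (by norm_num)]
              nlinarith only [hc, mul_pos hL hrpos]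
          _ ≤ μ ^ 2 * A (k + 1) := by nlinarith only [h12, mul_pos hμ hμ]
        · -- quadratic regime
          set D : ℝ := δ ^ 2 ^ (k - N) with hD
          have hDpos : 0 < D := by positivity
          have hAk : A k = 2 * D := hAnewton k hkN
          have hAk1 : A (k + 1) = 2 * D ^ 2 := by
            rw [hAnewton (k + 1) (by omega)]
            have he : k + 1 - N = (k - N) + 1 := by omega
            rw [he, pow_succ, pow_mul, hD]
          have hak' : L * r ≤ μ ^ 2 * (2 * D) := by rw [← hAk]; exact hak
          calc L * linfNorm (P (u (k + 1)))
              ≤ (L * r) ^ 2 / (2 * μ ^ 2) := hbound.trans_eq hquad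
          _ ≤ μ ^ 2 * (2 * D ^ 2) := by
              rw [div_le_iff₀ (by positivity)]
              nlinarith only [hak', mul_pos hL hrpos, mul_pos (mul_pos hμ hμ) hDpos]
          _ = μ ^ 2 * A (k + 1) := by rw [hAk1]
  -- full invariant
  have Qall : ∀ k, l1Norm (u k) ≤ S k ∧ L * linfNorm (P (u k)) ≤ μ ^ 2 * A k := by
    intro k
    induction k with
    | zero =>
      constructor
      · rw [hu0, hl1zero, hS]
        simp
      · rw [hu0, ← hs, hAdamped 0 (Nat.zero_le N)]
        have he : μ ^ 2 * (a0 - (0 : ℕ) / 2) = L * s := by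
          rw [ha0]; push_cast; field_simp; ring
        rw [he]
    | succ k ih => exact (key_step k ih).1
  have hstep_all : ∀ k, l1Norm (u (k + 1) - u k) ≤ σ k :=
    fun k => (key_step k (Qall k)).2
  -- summability and convergence
  have hσsum : Summable σ := by
    rw [← summable_nat_add_iff N]
    apply Summable.of_nonneg_of_le (fun j => hσnonneg _) (fun j => ?_)
      ((summable_geometric_of_lt_one hδpos.le hδ1).mul_left (μ / L * 2))
    calc σ (j + N) ≤ μ / L * (2 * δ ^ 2 ^ ((j + N) - N)) :=
      hσleN (j + N) (Nat.le_add_left N j)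
    _ = μ / L * 2 * δ ^ 2 ^ j := by rw [Nat.add_sub_cancel]; ring
    _ ≤ μ / L * 2 * δ ^ j := by
        apply mul_le_mul_of_nonneg_left
          (pow_le_pow_of_le_one hδpos.le hδ1.le (Nat.lt_two_pow_self (n := j)).le) (by positivity)
  have hdist : ∀ k, dist (u k) (u (k + 1)) ≤ σ k := by
    intro k
    rw [dist_eq_norm]
    calc ‖u k - u (k + 1)‖ ≤ l1Norm (u k - u (k + 1)) := norm_le_l1Norm _
    _ = l1Norm (u (k + 1) - u k) := by rw [← neg_sub, l1Norm_neg]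
    _ ≤ σ k := hstep_all k
  have hcauchy : CauchySeq u :=
    cauchySeq_of_summable_dist
      (Summable.of_nonneg_of_le (fun _ => dist_nonneg) hdist hσsum)
  obtain ⟨ustar, hconv⟩ := cauchySeq_tendsto_of_complete hcauchy
  refine ⟨ustar, hconv, ?_, ?_⟩
  · -- P ustar = 0
    have hAtend : Tendsto A atTop (𝓝 0) := by
      have h1 : Tendsto (fun k : ℕ => 2 * δ ^ (k - N)) atTop (𝓝 0) := by
        have h2 := (tendsto_pow_atTop_nhds_zero_of_lt_one hδpos.le hδ1).comp
          (tendsto_sub_atTop_nat N)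
        have h3 := h2.const_mul (2 : ℝ)
        simpa using h3
      apply squeeze_zero' (Eventually.of_forall fun k => (hApos k).le) ?_ h1
      filter_upwards [eventually_ge_atTop N] with k hk
      rw [hAnewton k hk]
      have hle : δ ^ 2 ^ (k - N) ≤ δ ^ (k - N) :=
        pow_le_pow_of_le_one hδpos.le hδ1.le (Nat.lt_two_pow_self (n := k - N)).le
      linarith only [hle]
    have hrtend : Tendsto (fun k => linfNorm (P (u k))) atTop (𝓝 0) := by
      have h1 : Tendsto (fun k => μ ^ 2 / L * A k) atTop (𝓝 0) := by
        have h0 := hAtend.const_mul (μ ^ 2 / L)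
        rw [mul_zero] at h0
        exact h0
      apply squeeze_zero (fun k => linfNorm_nonneg _) (fun k => ?_) h1
      have h2 := (Qall k).2
      rw [div_mul_eq_mul_div, le_div_iff₀ hL]
      linarith
    have hPtend : Tendsto (fun k => P (u k)) atTop (𝓝 (P ustar)) :=
      (hP.continuous.tendsto ustar).comp hconv
    funext j
    have h1 : Tendsto (fun k => P (u k) j) atTop (𝓝 (P ustar j)) :=
      ((continuous_apply j).tendsto (P ustar)).comp hPtend
    have h2 : Tendsto (fun k => P (u k) j) atTop (𝓝 0) := by
      apply squeeze_zero_norm (fun k => ?_) hrtend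
      simpa [Real.norm_eq_abs] using abs_le_linfNorm (P (u k)) j
    have := tendsto_nhds_unique h1 h2
    simpa using this
  · -- norm bound
    have h1 : Tendsto (fun k => l1Norm (u k)) atTop (𝓝 (l1Norm ustar)) :=
      (continuous_l1Norm.tendsto ustar).comp hconv
    have h2 : l1Norm ustar ≤ T :=
      le_of_tendsto h1 (Eventually.of_forall fun k => (Qall k).1.trans (hST k))
    rw [← hTeq]
    exact h2
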